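/- For m a positive integer, with θ_j = π(1 + 2j)/(4m) (j = 0,…,m−1) and δ ∈ {1, 2}, the determinant of the 2m × 2m matrix with rows indexed j = 0,…,2m−1 and columns alternating between cos(jδθ_p) and sin(jδθ_p) for p = 0,…,m−1 equals (1/2^m)·∏_{j=0}^{m−1}(2 sin δθ_j)·∏_{0≤s<j≤m−1} 4(1 − cos δ(θ_j − θ_s))(1 − cos δ(θ_j + θ_s)) up to sign, and in particular is nonzero. -/

import Mathlib

open Real Matrix

section Aux
variable {M : Type*} [CommMonoid M]

open Finset in
private lemma prod_range_two_mul' (n : ℕ) (f : ℕ → M) :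
    ∏ i ∈ range (2 * n), f i = ∏ q ∈ range n, (f (2 * q) * f (2 * q + 1)) := by
  induction n with
  | zero => simp
  | succ n ih =>
    rw [show 2 * (n + 1) = 2 * n + 1 + 1 from by ring, prod_range_succ, prod_range_succ, ih,
      prod_range_succ, mul_assoc]

open Finset in
private lemma prod_Iio_fin {n : ℕ} (j : Fin n) (f : ℕ → M) :
    ∏ i ∈ Finset.Iio j, f (i : ℕ) = ∏ i ∈ Finset.range (j : ℕ), f i := by
  rw [← Nat.Iio_eq_range, ← Fin.map_valEmbedding_Iio, prod_map]
  rfl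

open Finset in
private lemma fin_double_prod_eq_range (n : ℕ) (F : ℕ → ℕ → M) :
    (∏ i : Fin n, ∏ j ∈ Finset.Ioi i, F (i : ℕ) (j : ℕ)) =
      ∏ j ∈ range n, ∏ i ∈ range j, F i j := by
  rw [Finset.prod_comm' (t' := Finset.univ) (s' := fun j => Finset.Iio j)
    (by intro x y; simp [Finset.mem_Ioi, Finset.mem_Iio])]
  rw [← Fin.prod_univ_eq_prod_range (fun j => ∏ i ∈ range j, F i j) n]
  exact Finset.prod_congr rfl fun j _ => prod_Iio_fin j (fun i => F i (j : ℕ))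

end Aux

open Finset in
private lemma grand_pairing {R : Type*} [CommRing R] (w : ℕ → R) (n : ℕ) :
    ∏ j ∈ range (2 * n), ∏ i ∈ range j, (w j - w i) =
      (∏ q ∈ range n, (w (2 * q + 1) - w (2 * q))) *
        ∏ q ∈ range n, ∏ r ∈ range q,
          ((w (2 * q) - w (2 * r)) * (w (2 * q) - w (2 * r + 1)) *
            (w (2 * q + 1) - w (2 * r)) * (w (2 * q + 1) - w (2 * r + 1))) := by
  induction n with
  | zero => simp
  | succ n ih =>
    rw [show 2 * (n + 1) = 2 * n + 1 + 1 from by ring, prod_range_succ, prod_range_succ, ih,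
      prod_range_succ (n := 2 * n), prod_range_succ, prod_range_succ,
      prod_range_two_mul' n (fun i => w (2 * n) - w i),
      prod_range_two_mul' n (fun i => w (2 * n + 1) - w i)]
    simp only [Finset.prod_mul_distrib]
    ring

private lemma half_I : (1:ℂ)/(2*Complex.I) = -(Complex.I)/2 := by
  have := Complex.I_ne_zero
  field_simp
  linear_combination Complex.I_sq

private lemma cos_key (j : ℕ) (x : ℝ) :
    Complex.exp ((x:ℂ) * Complex.I) ^ j * (1/2) +
      Complex.exp (-((x:ℂ) * Complex.I)) ^ j * (1/2) = ((Real.cos ((j:ℝ) * x) : ℝ) : ℂ) := by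
  rw [← Complex.exp_nat_mul, ← Complex.exp_nat_mul, Complex.ofReal_cos, Complex.cos,
    show ((j:ℕ):ℂ) * ((x:ℂ) * Complex.I) = (((j:ℝ) * x : ℝ) : ℂ) * Complex.I by push_cast; ring,
    show ((j:ℕ):ℂ) * -((x:ℂ) * Complex.I) = -(((j:ℝ) * x : ℝ) : ℂ) * Complex.I by push_cast; ring]
  ring

private lemma sin_key (j : ℕ) (x : ℝ) :
    Complex.exp ((x:ℂ) * Complex.I) ^ j * (-(Complex.I/2)) +
      Complex.exp (-((x:ℂ) * Complex.I)) ^ j * (Complex.I/2) = ((Real.sin ((j:ℝ) * x) : ℝ) : ℂ) := by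
  rw [← Complex.exp_nat_mul, ← Complex.exp_nat_mul, Complex.ofReal_sin, Complex.sin,
    show ((j:ℕ):ℂ) * ((x:ℂ) * Complex.I) = (((j:ℝ) * x : ℝ) : ℂ) * Complex.I by push_cast; ring,
    show ((j:ℕ):ℂ) * -((x:ℂ) * Complex.I) = -(((j:ℝ) * x : ℝ) : ℂ) * Complex.I by push_cast; ring]
  ring

private lemma pair_key (x : ℝ) :
    Complex.exp (-((x:ℂ) * Complex.I)) - Complex.exp ((x:ℂ) * Complex.I) =
      -Complex.I * ((2 * Real.sin x : ℝ) : ℂ) := by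
  rw [Complex.ofReal_mul, Complex.ofReal_ofNat, Complex.ofReal_sin, Complex.sin]
  simp only [neg_mul]
  linear_combination (Complex.exp (-((x:ℂ) * Complex.I)) - Complex.exp ((x:ℂ) * Complex.I)) *
    Complex.I_sq

private lemma quad_key (a b : ℝ) :
    (Complex.exp ((a:ℂ) * Complex.I) - Complex.exp ((b:ℂ) * Complex.I)) *
      (Complex.exp ((a:ℂ) * Complex.I) - Complex.exp (-((b:ℂ) * Complex.I))) *
      (Complex.exp (-((a:ℂ) * Complex.I)) - Complex.exp ((b:ℂ) * Complex.I)) *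
      (Complex.exp (-((a:ℂ) * Complex.I)) - Complex.exp (-((b:ℂ) * Complex.I))) =
      ((4 * (1 - Real.cos (a - b)) * (1 - Real.cos (a + b)) : ℝ) : ℂ) := by
  push_cast
  simp only [Complex.cos, neg_mul]
  have hu := Complex.exp_ne_zero ((a:ℂ) * Complex.I)
  have hv := Complex.exp_ne_zero ((b:ℂ) * Complex.I)
  have e1 : Complex.exp (((a:ℂ) - b) * Complex.I) =
      Complex.exp ((a:ℂ) * Complex.I) * (Complex.exp ((b:ℂ) * Complex.I))⁻¹ := by
    rw [← Complex.exp_neg, ← Complex.exp_add]; congr 1; ring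
  have e2 : Complex.exp (-(((a:ℂ) - b) * Complex.I)) =
      (Complex.exp ((a:ℂ) * Complex.I))⁻¹ * Complex.exp ((b:ℂ) * Complex.I) := by
    rw [← Complex.exp_neg, ← Complex.exp_add]; congr 1; ring
  have e3 : Complex.exp (((a:ℂ) + b) * Complex.I) =
      Complex.exp ((a:ℂ) * Complex.I) * Complex.exp ((b:ℂ) * Complex.I) := by
    rw [← Complex.exp_add]; congr 1; ring
  have e4 : Complex.exp (-(((a:ℂ) + b) * Complex.I)) =
      (Complex.exp ((a:ℂ) * Complex.I))⁻¹ * (Complex.exp ((b:ℂ) * Complex.I))⁻¹ := by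
    rw [← Complex.exp_neg, ← Complex.exp_neg, ← Complex.exp_add]; congr 1; ring
  have e5 : Complex.exp (-((a:ℂ) * Complex.I)) = (Complex.exp ((a:ℂ) * Complex.I))⁻¹ :=
    Complex.exp_neg _
  have e6 : Complex.exp (-((b:ℂ) * Complex.I)) = (Complex.exp ((b:ℂ) * Complex.I))⁻¹ :=
    Complex.exp_neg _
  rw [e5, e6, e1, e2, e3, e4]
  field_simp
  ring

private lemma one_sub_cos_ne {x : ℝ} (h0 : 0 < x) (h2 : x < 2 * π) : 1 - Real.cos x ≠ 0 := by
  intro h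
  have hc : Real.cos x = 1 := by linarith
  obtain ⟨n, hn⟩ := (Real.cos_eq_one_iff x).mp hc
  have hπ := Real.pi_pos
  have hn0 : 0 < n := by
    by_contra hle
    push_neg at hle
    have : (n:ℝ) ≤ 0 := by exact_mod_cast hle
    nlinarith
  have h1n : (1:ℝ) ≤ n := by exact_mod_cast hn0
  nlinarith

set_option maxHeartbeats 2000000 in
theorem stmt11 (m : ℕ) (hm : 0 < m) (δ : ℕ) (hδ : δ = 1 ∨ δ = 2) (θ : ℕ → ℝ)
    (hθ : ∀ p, θ p = π * (1 + 2 * p) / (4 * m)) :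
    ((Matrix.of fun j c : Fin (2 * m) =>
        if (c : ℕ) % 2 = 0 then Real.cos ((j : ℕ) * (δ * θ ((c : ℕ) / 2)))
        else Real.sin ((j : ℕ) * (δ * θ ((c : ℕ) / 2)))).det =
        (1 / 2 ^ m) * (∏ j ∈ Finset.range m, (2 * Real.sin (δ * θ j))) *
          ∏ j ∈ Finset.range m, ∏ s ∈ Finset.range j,
            4 * (1 - Real.cos (δ * (θ j - θ s))) * (1 - Real.cos (δ * (θ j + θ s))) ∨
     (Matrix.of fun j c : Fin (2 * m) =>
        if (c : ℕ) % 2 = 0 then Real.cos ((j : ℕ) * (δ * θ ((c : ℕ) / 2)))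
        else Real.sin ((j : ℕ) * (δ * θ ((c : ℕ) / 2)))).det =
        -((1 / 2 ^ m) * (∏ j ∈ Finset.range m, (2 * Real.sin (δ * θ j))) *
          ∏ j ∈ Finset.range m, ∏ s ∈ Finset.range j,
            4 * (1 - Real.cos (δ * (θ j - θ s))) * (1 - Real.cos (δ * (θ j + θ s))))) ∧
    (Matrix.of fun j c : Fin (2 * m) =>
        if (c : ℕ) % 2 = 0 then Real.cos ((j : ℕ) * (δ * θ ((c : ℕ) / 2)))
        else Real.sin ((j : ℕ) * (δ * θ ((c : ℕ) / 2)))).det ≠ 0 := by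
  classical
  have hπ := Real.pi_pos
  have hm' : (0:ℝ) < m := by exact_mod_cast hm
  have hδ1 : (1:ℝ) ≤ (δ:ℝ) := by rcases hδ with rfl | rfl <;> norm_num
  have hδ2 : (δ:ℝ) ≤ 2 := by rcases hδ with rfl | rfl <;> norm_num
  set A : Matrix (Fin (2*m)) (Fin (2*m)) ℝ := Matrix.of fun j c : Fin (2 * m) =>
      if (c : ℕ) % 2 = 0 then Real.cos ((j : ℕ) * (δ * θ ((c : ℕ) / 2)))
      else Real.sin ((j : ℕ) * (δ * θ ((c : ℕ) / 2))) with hA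
  set R : ℝ := (1 / 2 ^ m) * (∏ j ∈ Finset.range m, (2 * Real.sin (δ * θ j))) *
      ∏ j ∈ Finset.range m, ∏ s ∈ Finset.range j,
        4 * (1 - Real.cos (δ * (θ j - θ s))) * (1 - Real.cos (δ * (θ j + θ s))) with hR
  -- basic bounds
  have hθpos : ∀ j : ℕ, 0 < θ j := by
    intro j; rw [hθ]; positivity
  have hhalf : ∀ j : ℕ, j < m → 2 * θ j < π := by
    intro j hj
    have hj' : (j:ℝ) ≤ (m:ℝ) - 1 := by
      have : ((j:ℝ) + 1) ≤ m := by exact_mod_cast hj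
      linarith
    rw [hθ, mul_div_assoc']
    rw [div_lt_iff₀ (by positivity)]
    nlinarith
  have hδθ : ∀ j : ℕ, j < m → (δ:ℝ) * θ j ≤ 2 * θ j := by
    intro j hj
    nlinarith [hθpos j]
  -- complex nodes
  set w : ℕ → ℂ := fun c =>
    if c % 2 = 0 then Complex.exp ((((δ:ℝ) * θ (c/2) : ℝ) : ℂ) * Complex.I)
    else Complex.exp (-((((δ:ℝ) * θ (c/2) : ℝ) : ℂ) * Complex.I)) with hw
  have hw0 : ∀ q : ℕ, w (2*q) = Complex.exp ((((δ:ℝ) * θ q : ℝ):ℂ) * Complex.I) := by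
    intro q
    rw [hw]
    simp only []
    rw [if_pos (by omega), Nat.mul_div_cancel_left q (by norm_num)]
  have hw1 : ∀ q : ℕ, w (2*q+1) = Complex.exp (-((((δ:ℝ) * θ q : ℝ):ℂ) * Complex.I)) := by
    intro q
    rw [hw]
    simp only []
    rw [if_neg (by omega), show (2*q+1)/2 = q from by omega]
  -- the equivalence and block matrices
  set e : Fin (2*m) ≃ (Fin 2 × Fin m) :=
    { toFun := fun c => (⟨c.val % 2, Nat.mod_lt _ (by norm_num)⟩,
        ⟨c.val / 2, by have := c.isLt; omega⟩),
      invFun := fun p => ⟨2 * p.2.val + p.1.val, by have := p.1.isLt; have := p.2.isLt; omega⟩,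
      left_inv := fun c => by
        apply Fin.ext
        simp only []
        omega,
      right_inv := fun p => by
        obtain ⟨⟨i, hi⟩, ⟨k, hk⟩⟩ := p
        simp only [Prod.mk.injEq, Fin.ext_iff]
        omega } with he
  set b : Matrix (Fin 2) (Fin 2) ℂ := !![1/2, -(Complex.I/2); 1/2, Complex.I/2] with hb
  set B : Matrix (Fin (2*m)) (Fin (2*m)) ℂ :=
    ((Matrix.blockDiagonal fun _ : Fin m => b).submatrix e e) with hB
  have hBapp : ∀ k c : Fin (2*m), B k c =
      if (k:ℕ)/2 = (c:ℕ)/2 then b ⟨(k:ℕ)%2, by omega⟩ ⟨(c:ℕ)%2, by omega⟩ else 0 := by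
    intro k c
    show (Matrix.blockDiagonal fun _ : Fin m => b) (e k) (e c) = _
    rw [Matrix.blockDiagonal_apply]
    by_cases h : (k:ℕ)/2 = (c:ℕ)/2
    · rw [if_pos (by exact Fin.ext h), if_pos h]
      rfl
    · rw [if_neg (fun hh => h (congrArg Fin.val hh)), if_neg h]
  -- A complexified equals vandermonde * B
  have hAB : A.map (fun x => (x:ℂ)) =
      (Matrix.vandermonde (fun c : Fin (2*m) => w c.val))ᵀ * B := by
    ext j c
    have hc := c.isLt
    have hk0 : 2 * ((c:ℕ)/2) < 2*m := by omega
    have hk1 : 2 * ((c:ℕ)/2) + 1 < 2*m := by omega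
    rw [Matrix.map_apply, Matrix.mul_apply,
      Finset.sum_eq_add_of_mem (⟨2*((c:ℕ)/2), hk0⟩ : Fin (2*m)) (⟨2*((c:ℕ)/2)+1, hk1⟩ : Fin (2*m))
        (Finset.mem_univ _) (Finset.mem_univ _) (by simp [Fin.ext_iff])
        (by
          rintro k - ⟨h1, h2⟩
          have h1' : (k:ℕ) ≠ 2*((c:ℕ)/2) := fun hh => h1 (Fin.ext hh)
          have h2' : (k:ℕ) ≠ 2*((c:ℕ)/2)+1 := fun hh => h2 (Fin.ext hh)
          rw [hBapp, if_neg (by omega), mul_zero])]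
    rw [hBapp, hBapp,
      if_pos ((by omega : 2*((c:ℕ)/2)/2 = (c:ℕ)/2) : _),
      if_pos ((by omega : (2*((c:ℕ)/2)+1)/2 = (c:ℕ)/2) : _)]
    simp only [Matrix.transpose_apply, Matrix.vandermonde_apply]
    have hv0 : w ((⟨2*((c:ℕ)/2), hk0⟩ : Fin (2*m)) : ℕ) =
        Complex.exp ((((δ:ℝ) * θ ((c:ℕ)/2) : ℝ):ℂ) * Complex.I) := hw0 _
    have hv1 : w ((⟨2*((c:ℕ)/2)+1, hk1⟩ : Fin (2*m)) : ℕ) =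
        Complex.exp (-((((δ:ℝ) * θ ((c:ℕ)/2) : ℝ):ℂ) * Complex.I)) := hw1 _
    rw [hv0, hv1]
    have hi0 : (⟨(((⟨2*((c:ℕ)/2), hk0⟩ : Fin (2*m)) : ℕ))%2, by omega⟩ : Fin 2) = 0 := by
      apply Fin.ext; show 2*((c:ℕ)/2) % 2 = 0; omega
    have hi1 : (⟨(((⟨2*((c:ℕ)/2)+1, hk1⟩ : Fin (2*m)) : ℕ))%2, by omega⟩ : Fin 2) = 1 := by
      apply Fin.ext; show (2*((c:ℕ)/2)+1) % 2 = 1; omega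
    rw [hi0, hi1]
    by_cases hc2 : (c:ℕ) % 2 = 0
    · have hcol : (⟨(c:ℕ)%2, by omega⟩ : Fin 2) = 0 := by apply Fin.ext; simp only []; omega
      rw [hcol, hA]
      simp only [Matrix.of_apply, if_pos hc2, hb]
      simp only [Matrix.cons_val', Matrix.cons_val_zero, Matrix.empty_val',
        Matrix.cons_val_fin_one, Matrix.cons_val_one, Matrix.head_cons, Matrix.head_fin_const]
      exact (cos_key (j:ℕ) ((δ:ℝ) * θ ((c:ℕ)/2))).symm
    · have hcol : (⟨(c:ℕ)%2, by omega⟩ : Fin 2) = 1 := by apply Fin.ext; simp only []; omega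
      rw [hcol, hA]
      simp only [Matrix.of_apply, if_neg hc2, hb]
      simp only [Matrix.cons_val', Matrix.cons_val_zero, Matrix.empty_val',
        Matrix.cons_val_fin_one, Matrix.cons_val_one, Matrix.head_cons, Matrix.head_fin_const]
      exact (sin_key (j:ℕ) ((δ:ℝ) * θ ((c:ℕ)/2))).symm
  -- determinants
  have hdetB : B.det = (Complex.I/2)^m := by
    rw [hB, Matrix.det_submatrix_equiv_self, Matrix.det_blockDiagonal]
    have hbdet : b.det = Complex.I/2 := by
      rw [hb, Matrix.det_fin_two_of]
      ring
    rw [Finset.prod_congr rfl (fun _ _ => hbdet), Finset.prod_const, Finset.card_univ,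
      Fintype.card_fin]
  have hdetV : (Matrix.vandermonde (fun c : Fin (2*m) => w c.val))ᵀ.det =
      ∏ j ∈ Finset.range (2*m), ∏ i ∈ Finset.range j, (w j - w i) := by
    rw [Matrix.det_transpose, Matrix.det_vandermonde]
    exact fin_double_prod_eq_range (2*m) (fun i j => w j - w i)
  have hP1 : (∏ q ∈ Finset.range m, (w (2*q+1) - w (2*q))) =
      (-Complex.I)^m * ((∏ j ∈ Finset.range m, (2 * Real.sin ((δ:ℝ) * θ j)) : ℝ) : ℂ) := by
    have hterm : ∀ q ∈ Finset.range m, w (2*q+1) - w (2*q) =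
        -Complex.I * ((2 * Real.sin ((δ:ℝ) * θ q) : ℝ) : ℂ) := fun q _ => by
      rw [hw1 q, hw0 q]; exact pair_key _
    rw [Complex.ofReal_prod, Finset.prod_congr rfl hterm,
      Finset.prod_mul_distrib, Finset.prod_const, Finset.card_range]
  have hP2 : (∏ q ∈ Finset.range m, ∏ r ∈ Finset.range q,
        ((w (2*q) - w (2*r)) * (w (2*q) - w (2*r+1)) *
          (w (2*q+1) - w (2*r)) * (w (2*q+1) - w (2*r+1)))) =
      ((∏ j ∈ Finset.range m, ∏ s ∈ Finset.range j,
        4 * (1 - Real.cos ((δ:ℝ) * (θ j - θ s))) * (1 - Real.cos ((δ:ℝ) * (θ j + θ s))) : ℝ) : ℂ) := by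
    rw [Complex.ofReal_prod]
    refine Finset.prod_congr rfl fun q hq => ?_
    rw [Complex.ofReal_prod]
    refine Finset.prod_congr rfl fun r hr => ?_
    rw [hw0 q, hw1 q, hw0 r, hw1 r,
      show (δ:ℝ) * (θ q - θ r) = (δ:ℝ) * θ q - (δ:ℝ) * θ r from mul_sub _ _ _,
      show (δ:ℝ) * (θ q + θ r) = (δ:ℝ) * θ q + (δ:ℝ) * θ r from mul_add _ _ _]
    exact quad_key _ _
  have hI : (-Complex.I) * (Complex.I/2) = 1/2 := by
    linear_combination (-1/2 : ℂ) * Complex.I_sq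
  have hpow : (-Complex.I)^m * (Complex.I/2)^m = ((1:ℂ)/2)^m := by
    rw [← mul_pow, hI]
  have key : ((A.det : ℝ) : ℂ) = ((R : ℝ) : ℂ) := by
    have h1 : ((A.det : ℝ) : ℂ) = (A.map (fun x => (x:ℂ))).det :=
      RingHom.map_det Complex.ofRealHom A
    rw [h1, hAB, Matrix.det_mul, hdetV, hdetB, grand_pairing w m, hP1, hP2, hR,
      Complex.ofReal_mul, Complex.ofReal_mul,
      show ((1/2^m : ℝ) : ℂ) = ((1:ℂ)/2)^m from by push_cast; rw [div_pow]; norm_num,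
      ← hpow]
    ring
  have hdet : A.det = R := by exact_mod_cast key
  -- nonvanishing
  have hRne : R ≠ 0 := by
    rw [hR]
    refine mul_ne_zero (mul_ne_zero ?_ ?_) ?_
    · positivity
    · rw [Finset.prod_ne_zero_iff]
      intro j hj
      have hjm := Finset.mem_range.mp hj
      have h1 : 0 < (δ:ℝ) * θ j := mul_pos (by linarith) (hθpos j)
      have h2 : (δ:ℝ) * θ j < π := by
        have := hδθ j hjm
        have := hhalf j hjm
        linarith
      have := Real.sin_pos_of_pos_of_lt_pi h1 h2
      exact ne_of_gt (by linarith)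
    · rw [Finset.prod_ne_zero_iff]
      intro j hj
      rw [Finset.prod_ne_zero_iff]
      intro s hs
      have hjm : j < m := Finset.mem_range.mp hj
      have hsj : s < j := Finset.mem_range.mp hs
      have hsm : s < m := lt_trans hsj hjm
      have hts : θ s < θ j := by
        rw [hθ s, hθ j]
        have hsj' : (s:ℝ) < j := by exact_mod_cast hsj
        gcongr
      have hδpos : (0:ℝ) < δ := by linarith
      have hdge : (0:ℝ) ≤ 2 - δ := by linarith
      refine mul_ne_zero (mul_ne_zero ?_ ?_) ?_
      · norm_num
      · apply one_sub_cos_ne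
        · exact mul_pos hδpos (by linarith)
        · have e1 : (δ:ℝ) * (θ j - θ s) ≤ 2 * (θ j - θ s) :=
            by nlinarith [mul_nonneg hdge (by linarith : (0:ℝ) ≤ θ j - θ s)]
          have := hhalf j hjm
          have := hθpos s
          linarith
      · apply one_sub_cos_ne
        · exact mul_pos hδpos (by nlinarith [hθpos j, hθpos s])
        · have e1 : (δ:ℝ) * (θ j + θ s) ≤ 2 * (θ j + θ s) :=
            by nlinarith [mul_nonneg hdge (by nlinarith [hθpos j, hθpos s] : (0:ℝ) ≤ θ j + θ s)]
          have := hhalf j hjm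
          have := hhalf s hsm
          linarith
  exact ⟨Or.inl hdet, by rw [hdet]; exact hRne⟩
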